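/- Let q be a power of a prime p > 2 and let C be the plane curve over F_{q^2} defined by x^{q+1} + y^{q+1} + z^{q+1} = 0. Then there exists an F_{q^2}-line L that intersects C transversely, i.e., L ∩ C consists of q + 1 distinct points over the algebraic closure of F_{q^2}. -/

import Mathlib

open MvPolynomial

noncomputable section

/-- The projective plane over a field `K`, as the projectivization of `K^3`. -/
abbrev ProjPlane (K : Type*) [Field K] := Projectivization K (Fin 3 → K)

variable {F : Type*} [Field F]

/-- A geometric point (over the algebraic closure) lies on the plane curve defined by `f`. -/
def OnCurve (f : MvPolynomial (Fin 3) F) (P : ProjPlane (AlgebraicClosure F)) : Prop :=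
  aeval P.rep f = 0

/-- A geometric point lies on the `F`-rational line with coefficient vector `a`. -/
def OnLine (a : Fin 3 → F) (P : ProjPlane (AlgebraicClosure F)) : Prop :=
  ∑ i, algebraMap F (AlgebraicClosure F) (a i) * P.rep i = 0

/-- The plane curve defined by `f` is smooth: the gradient of `f` is nonzero at every
geometric point of the curve. -/
def SmoothCurve (f : MvPolynomial (Fin 3) F) : Prop :=
  ∀ P : ProjPlane (AlgebraicClosure F), OnCurve f P → ∃ i, aeval P.rep (pderiv i f) ≠ 0

/-- The `F`-line with coefficients `a` meets the curve defined by `f` transversely: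
the intersection consists of exactly `d` distinct geometric points. -/
def Transverse (f : MvPolynomial (Fin 3) F) (a : Fin 3 → F) (d : ℕ) : Prop :=
  {P : ProjPlane (AlgebraicClosure F) | OnCurve f P ∧ OnLine a P}.ncard = d

/-- The restriction of `f` to the line `t ↦ v + t • w`, as a univariate polynomial. -/
def LinePoly (f : MvPolynomial (Fin 3) F) (v w : Fin 3 → AlgebraicClosure F) :
    Polynomial (AlgebraicClosure F) :=
  aeval (fun i => Polynomial.C (v i) + Polynomial.X * Polynomial.C (w i)) f

/-- `P` is a flex point of the curve defined by `f`: the tangent line at `P` meets the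
curve at `P` with intersection multiplicity at least 3. The tangent line is parametrized
through `P.rep` and a direction `w` lying on the tangent line, independent from `P.rep`. -/
def IsFlex (f : MvPolynomial (Fin 3) F) (P : ProjPlane (AlgebraicClosure F)) : Prop :=
  OnCurve f P ∧ ∃ w : Fin 3 → AlgebraicClosure F,
    (¬ ∃ c : AlgebraicClosure F, w = c • P.rep) ∧
    (∑ i, aeval P.rep (pderiv i f) * w i = 0) ∧
    (Polynomial.X : Polynomial (AlgebraicClosure F)) ^ 3 ∣ LinePoly f P.rep w

/-- The `F`-line with coefficients `a` is the tangent line to the curve `f` at the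
geometric point `P`, i.e. `a` is proportional to the gradient of `f` at `P`. -/
def IsTangentAt (f : MvPolynomial (Fin 3) F) (a : Fin 3 → F)
    (P : ProjPlane (AlgebraicClosure F)) : Prop :=
  OnCurve f P ∧ ∃ c : AlgebraicClosure F, c ≠ 0 ∧
    ∀ i, algebraMap F (AlgebraicClosure F) (a i) = c * aeval P.rep (pderiv i f)

/-- The `q`-power Frobenius map on the projective plane. -/
def FrobPt {K : Type*} [Field K] (q : ℕ) (P : ProjPlane K) : ProjPlane K :=
  Projectivization.mk K (fun i => P.rep i ^ q) (by
    intro hc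
    rcases Nat.eq_zero_or_pos q with h0 | h0
    · have := congrFun hc 0
      simp [h0] at this
    · apply P.rep_nonzero
      funext i
      have := congrFun hc i
      simp only [Pi.zero_apply] at this ⊢
      exact pow_eq_zero_iff h0.ne' |>.mp this)

/-- A geometric point of the projective plane is `F`-rational. -/
def IsRationalPt (P : ProjPlane (AlgebraicClosure F)) : Prop :=
  ∃ v : Fin 3 → F, v ≠ 0 ∧ ∃ c : AlgebraicClosure F, c ≠ 0 ∧
    ∀ i, P.rep i = c * algebraMap F (AlgebraicClosure F) (v i)

/-- The curve defined by `f` is Frobenius non-classical over `F` (with `q = #F`):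
the image of every geometric point of the curve under the `q`-power Frobenius lies on
the tangent line at that point. -/
def FrobeniusNonClassical (f : MvPolynomial (Fin 3) F) (q : ℕ) : Prop :=
  ∀ P : ProjPlane (AlgebraicClosure F), OnCurve f P →
    ∑ i, aeval P.rep (pderiv i f) * P.rep i ^ q = 0


/-- The Hermitian curve `x^(q+1) + y^(q+1) + z^(q+1) = 0` over `F_{q²}` admits an
`F_{q²}`-line meeting it transversely in `q + 1` distinct geometric points. -/
-- auxiliary
lemma aux_root_count (K : Type*) [Field K] [IsAlgClosed K] (n : ℕ) (hn : (n:K) ≠ 0)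
    (hn0 : n ≠ 0) : {t : K | t ^ n = -1}.ncard = n := by
  classical
  have hsep : (Polynomial.X ^ n - Polynomial.C (-1) : Polynomial K).Separable :=
    Polynomial.separable_X_pow_sub_C (-1) hn (by norm_num)
  have hne : (Polynomial.X ^ n - Polynomial.C (-1) : Polynomial K) ≠ 0 :=
    Polynomial.X_pow_sub_C_ne_zero (Nat.pos_of_ne_zero hn0) _
  have hset : {t : K | t ^ n = -1} =
      ↑((Polynomial.X ^ n - Polynomial.C (-1) : Polynomial K).roots.toFinset) := by
    ext t
    simp only [Finset.coe_sort_coe, Multiset.mem_toFinset, Polynomial.mem_roots, hne, Ne,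
      not_false_iff, true_and, Polynomial.IsRoot.def, Polynomial.eval_sub, Polynomial.eval_pow,
      Polynomial.eval_X, Polynomial.eval_C, sub_eq_zero, Set.mem_setOf_eq, Finset.mem_coe]
  rw [hset, Set.ncard_coe_finset, Multiset.toFinset_card_of_nodup (Polynomial.nodup_roots hsep),
    Polynomial.splits_iff_card_roots.mp (IsAlgClosed.splits _),
    Polynomial.natDegree_X_pow_sub_C]

theorem hermitian_curve_has_transverse_line
    (p s q : ℕ) [Fact p.Prime] (hp : 2 < p) (hs : 1 ≤ s) (hq : q = p ^ s)
    (F : Type*) [Field F] [Fintype F] [CharP F p] (hcard : Fintype.card F = q ^ 2) :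
    ∃ a : Fin 3 → F, a ≠ 0 ∧
      Transverse (X 0 ^ (q + 1) + X 1 ^ (q + 1) + X 2 ^ (q + 1) : MvPolynomial (Fin 3) F)
        a (q + 1) := by
  classical
  set K := AlgebraicClosure F
  set n := q + 1 with hn_def
  refine ⟨![0, 0, 1], ?_, ?_⟩
  · intro h
    have := congrFun h 2
    simp at this
  -- characterize the intersection set
  set f : MvPolynomial (Fin 3) F := X 0 ^ n + X 1 ^ n + X 2 ^ n with hf
  have haev : ∀ v : Fin 3 → K, aeval v f = v 0 ^ n + v 1 ^ n + v 2 ^ n := by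
    intro v; simp [hf]
  have hline : ∀ P : ProjPlane K, OnLine ![0, 0, 1] P ↔ P.rep 2 = 0 := by
    intro P
    unfold OnLine
    rw [Fin.sum_univ_three]
    simp [Matrix.cons_val_zero, Matrix.cons_val_one]
  set S := {P : ProjPlane K | OnCurve f P ∧ OnLine ![0,0,1] P} with hS
  -- rep 1 is nonzero on S
  have hrep1 : ∀ P ∈ S, P.rep 1 ≠ 0 := by
    intro P hP h1
    obtain ⟨hc, hl⟩ := hP
    rw [hline] at hl
    have hc' : P.rep 0 ^ n + P.rep 1 ^ n + P.rep 2 ^ n = 0 := by rw [← haev]; exact hc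
    rw [h1, hl] at hc'
    simp [hn_def] at hc'
    exact P.rep_nonzero (funext fun i => by
      fin_cases i <;> simp_all)
  set φ : ProjPlane K → K := fun P => P.rep 0 / P.rep 1 with hφ
  have hinj : Set.InjOn φ S := by
    intro P hP Q hQ hPQ
    have h1P := hrep1 P hP
    have h1Q := hrep1 Q hQ
    have h2P : P.rep 2 = 0 := (hline P).mp hP.2
    have h2Q : Q.rep 2 = 0 := (hline Q).mp hQ.2
    have hsm : P.rep = (P.rep 1 / Q.rep 1) • Q.rep := by
      funext i
      fin_cases i
      · have hPQ' : P.rep 0 * Q.rep 1 = Q.rep 0 * P.rep 1 := by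
          have h := hPQ
          simp only [hφ] at h
          rwa [div_eq_div_iff h1P h1Q] at h
        simp only [Pi.smul_apply, smul_eq_mul]
        show P.rep 0 = P.rep 1 / Q.rep 1 * Q.rep 0
        rw [div_mul_eq_mul_div, eq_div_iff h1Q]
        linear_combination hPQ'
      · simp only [Pi.smul_apply, smul_eq_mul]; exact (div_mul_cancel₀ _ h1Q).symm
      · simp [h2P, h2Q]
    calc P = Projectivization.mk K P.rep P.rep_nonzero := (Projectivization.mk_rep P).symm
      _ = Projectivization.mk K Q.rep Q.rep_nonzero := by
            rw [Projectivization.mk_eq_mk_iff']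
            exact ⟨_, hsm.symm⟩
      _ = Q := Projectivization.mk_rep Q
  have himg : φ '' S = {t : K | t ^ n = -1} := by
    ext t
    constructor
    · rintro ⟨P, hP, rfl⟩
      have h1 := hrep1 P hP
      have h2 : P.rep 2 = 0 := (hline P).mp hP.2
      have hc : P.rep 0 ^ n + P.rep 1 ^ n + P.rep 2 ^ n = 0 := by rw [← haev]; exact hP.1
      rw [h2] at hc
      have hn0 : n ≠ 0 := by omega
      simp only [Set.mem_setOf_eq, hφ]
      rw [zero_pow hn0, add_zero] at hc
      rw [div_pow, div_eq_iff (pow_ne_zero n h1)]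
      linear_combination hc
    · intro ht
      simp only [Set.mem_setOf_eq] at ht
      set v : Fin 3 → K := ![t, 1, 0] with hv
      have hvne : v ≠ 0 := by
        intro h
        have := congrFun h 1
        simp [hv] at this
      refine ⟨Projectivization.mk K v hvne, ?_, ?_⟩
      · obtain ⟨c, hc⟩ := Projectivization.exists_smul_eq_mk_rep K v hvne
        have hrep : ∀ i, (Projectivization.mk K v hvne).rep i = (c : K) * v i := by
          intro i; rw [← hc]; rfl
        constructor
        · show aeval _ f = 0
          rw [haev, hrep 0, hrep 1, hrep 2]
          simp only [hv, Matrix.cons_val_zero, Matrix.cons_val_one, Matrix.head_cons,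
            Matrix.cons_val_two, Matrix.tail_cons]
          have hn0 : n ≠ 0 := by omega
          rw [mul_pow, mul_pow, mul_pow, one_pow, zero_pow hn0, ht]
          ring
        · rw [hline, hrep 2]
          simp [hv]
      · obtain ⟨c, hc⟩ := Projectivization.exists_smul_eq_mk_rep K v hvne
        have hrep : ∀ i, (Projectivization.mk K v hvne).rep i = (c : K) * v i := by
          intro i; rw [← hc]; rfl
        simp only [hφ, hrep 0, hrep 1, hv, Matrix.cons_val_zero, Matrix.cons_val_one,
          Matrix.head_cons, mul_one]
        have h0 := hrep 0
        have h1 := hrep 1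
        simp only [hv, Matrix.cons_val_zero, Matrix.cons_val_one, Matrix.head_cons, mul_one] at h0 h1
        rw [h0, h1]
        exact mul_div_cancel_left₀ t c.ne_zero
  have hcount : ({t : K | t ^ n = -1}).ncard = n := by
    apply aux_root_count
    · have hq0 : (q : K) = 0 := by
        have : CharP K p := charP_of_injective_algebraMap (algebraMap F K).injective p
        rw [hq]
        rw [Nat.cast_pow, CharP.cast_eq_zero K p]
        exact zero_pow (by omega)
      rw [hn_def]
      push_cast
      rw [hq0]
      norm_num
    · omega
  show S.ncard = n
  rw [← hcount, ← himg, Set.ncard_image_of_injOn hinj]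

end
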